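/- arXiv:1812.01800 — 5 statements merged into one kernel-verified Lean document; each statement's English description precedes it below -/
import Mathlib

section
/- Let R be a round local tournament with round labelling u_1, …, u_r, let V_1, …, V_r be nonempty arcless digraphs, and let D* = R[V_1, …, V_r] be the corresponding extension of R. Let v_j ∈ V_j and suppose that the out-neighbourhood of v_j in D* equals V_{j+1} ∪ … ∪ V_k (indices modulo r). Then for every vertex v_k ∈ V_k, one has N+_{D*}(v_k) ⊆ N++_{D*}(v_j), and hence d++_{D*}(v_j) ≥ d+_{D*}(v_k). -/
/-- The out-neighbourhood of `x` in the digraph with arc relation `A`. -/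
def Nplus {V : Type*} (A : V → V → Prop) (x : V) : Set V := {y | A x y}

/-- The in-neighbourhood of `x`. -/
def Nminus {V : Type*} (A : V → V → Prop) (x : V) : Set V := {y | A y x}

/-- The second out-neighbourhood of `x`:
`(⋃ u ∈ N⁺(x), N⁺(u)) \ N⁺(x)`. -/
def Nsecond {V : Type*} (A : V → V → Prop) (x : V) : Set V :=
  (⋃ u ∈ Nplus A x, Nplus A u) \ Nplus A x

/-- Out-degree `d⁺(x)`. -/
noncomputable def dplus {V : Type*} (A : V → V → Prop) (x : V) : ℕ := (Nplus A x).ncard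

/-- In-degree `d⁻(x)`. -/
noncomputable def dminus {V : Type*} (A : V → V → Prop) (x : V) : ℕ := (Nminus A x).ncard

/-- Second out-degree `d⁺⁺(x)`. -/
noncomputable def dsecond {V : Type*} (A : V → V → Prop) (x : V) : ℕ := (Nsecond A x).ncard

/-- `x` is a Sullivan-1 vertex: `d⁺⁺(x) ≥ d⁻(x)`. -/
def Sullivan1 {V : Type*} (A : V → V → Prop) (x : V) : Prop :=
  dminus A x ≤ dsecond A x

/-- `x` is a Sullivan-2 vertex: `d⁺⁺(x) + d⁺(x) ≥ 2·d⁻(x)`. -/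
def Sullivan2 {V : Type*} (A : V → V → Prop) (x : V) : Prop :=
  2 * dminus A x ≤ dsecond A x + dplus A x

/-- Two vertices are adjacent if there is an arc between them in some direction. -/
def Adjacent {V : Type*} (A : V → V → Prop) (x y : V) : Prop := A x y ∨ A y x

/-- An oriented graph: no loops and no 2-cycles. -/
def IsOriented {V : Type*} (A : V → V → Prop) : Prop :=
  (∀ x, ¬ A x x) ∧ ∀ x y, A x y → ¬ A y x

/-- A local tournament: an oriented graph in which any two distinct out-neighbours
of a vertex are adjacent, and any two distinct in-neighbours are adjacent. -/
def IsLocalTournament {V : Type*} (A : V → V → Prop) : Prop :=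
  IsOriented A ∧
  (∀ x y z, A x y → A x z → y ≠ z → Adjacent A y z) ∧
  (∀ x y z, A y x → A z x → y ≠ z → Adjacent A y z)

/-- A tournament: an oriented graph in which any two distinct vertices are adjacent. -/
def IsTournament {V : Type*} (A : V → V → Prop) : Prop :=
  IsOriented A ∧ ∀ x y : V, x ≠ y → Adjacent A x y

/-- A digraph is strong if every vertex can reach every other by a directed path. -/
def IsStrong {V : Type*} (A : V → V → Prop) : Prop :=
  ∀ x y : V, Relation.ReflTransGen A x y

/-- A digraph on `ZMod r` is roundly labelled (by the natural labelling `0,1,…,r-1`)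
if for each vertex `i` the out-neighbourhood is `{i+1, …, i+d⁺(i)}` and the
in-neighbourhood is `{i−d⁻(i), …, i−1}` (indices modulo `r`). -/
def IsRoundLabelling {r : ℕ} (B : ZMod r → ZMod r → Prop) : Prop :=
  ∀ i : ZMod r,
    Nplus B i = (fun t : ℕ => i + (t : ZMod r)) '' Set.Icc 1 (dplus B i) ∧
    Nminus B i = (fun t : ℕ => i - (t : ZMod r)) '' Set.Icc 1 (dminus B i)

/-- A digraph is round if its vertices admit a round labelling. -/
def IsRound {V : Type*} (A : V → V → Prop) : Prop :=
  ∃ r : ℕ, 0 < r ∧ ∃ e : ZMod r ≃ V,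
    IsRoundLabelling (fun i j => A (e i) (e j))

/-- A digraph `A` on `V` is round decomposable: `A = R[S₁,…,S_r]` where `R` is a
round local tournament on `r ≥ 2` vertices (realized on `ZMod r`), the parts are
the fibres of a surjection `φ : V → ZMod r` (so all parts are nonempty and pairwise
disjoint), arcs between distinct parts are exactly those induced by `R`, and each
part induces a strong tournament. -/
def IsRoundDecomposable {V : Type*} (A : V → V → Prop) : Prop :=
  ∃ (r : ℕ) (B : ZMod r → ZMod r → Prop) (φ : V → ZMod r),
    2 ≤ r ∧ IsLocalTournament B ∧ IsRound B ∧ Function.Surjective φ ∧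
    (∀ x y, φ x ≠ φ y → (A x y ↔ B (φ x) (φ y))) ∧
    (∀ x y, φ x = φ y → x ≠ y → Adjacent A x y) ∧
    (∀ i : ZMod r, ∀ x y, φ x = i → φ y = i →
      Relation.ReflTransGen (fun a b => A a b ∧ φ a = i ∧ φ b = i) x y)

/-- Let `R` be a round local tournament with round labelling `u_1, …, u_r`
(realized on `ZMod r` with its natural labelling), let `D* = R[V_1, …, V_r]` be the
extension of `R` whose (nonempty, arcless) parts are the fibres of a surjection
`φ : V → ZMod r`, so `Astar x y ↔ B (φ x) (φ y)`.  Let `v ∈ V_j` and suppose that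
`N⁺_{D*}(v) = V_{j+1} ∪ … ∪ V_k` where `k = j + m` (indices modulo `r`).  Then for
every vertex `w ∈ V_k`, `N⁺_{D*}(w) ⊆ N⁺⁺_{D*}(v)`, and hence
`d⁺⁺_{D*}(v) ≥ d⁺_{D*}(w)`. -/
theorem second_neighbourhood_in_extension_of_round {V : Type*} [Fintype V]
    (r : ℕ) (hr : 0 < r)
    (B : ZMod r → ZMod r → Prop) (hB : IsLocalTournament B)
    (hround : IsRoundLabelling B)
    (φ : V → ZMod r) (hφ : Function.Surjective φ)
    (Astar : V → V → Prop) (hAstar : ∀ x y, Astar x y ↔ B (φ x) (φ y))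
    (j : ZMod r) (v : V) (hv : φ v = j)
    (m : ℕ) (hm : 1 ≤ m)
    (hN : Nplus Astar v = {y : V | ∃ t : ℕ, 1 ≤ t ∧ t ≤ m ∧ φ y = j + (t : ZMod r)}) :
    ∀ w : V, φ w = j + (m : ZMod r) →
      Nplus Astar w ⊆ Nsecond Astar v ∧ dplus Astar w ≤ dsecond Astar v := by
  obtain ⟨⟨hirr, hasym⟩, -, -⟩ := hB
  haveI : NeZero r := ⟨hr.ne'⟩
  -- characterization of out-neighbourhood of j in B
  have Bj : ∀ c : ZMod r, B j c ↔ ∃ t : ℕ, 1 ≤ t ∧ t ≤ m ∧ c = j + (t : ZMod r) := by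
    intro c
    obtain ⟨x, hx⟩ := hφ c
    have h1 : Astar v x ↔ B j c := by rw [hAstar, hv, hx]
    have h2 : x ∈ Nplus Astar v ↔ ∃ t : ℕ, 1 ≤ t ∧ t ≤ m ∧ φ x = j + (t : ZMod r) := by
      rw [hN]; rfl
    simp only [Nplus, Set.mem_setOf_eq, hx] at h2
    rw [← h1]; exact h2
  have hmr : m < r := by
    by_contra h
    push_neg at h
    have : B j (j + ((r : ℕ) : ZMod r)) := (Bj _).2 ⟨r, hr, h, rfl⟩
    rw [ZMod.natCast_self, add_zero] at this
    exact hirr j this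
  have hBjm : B j (j + (m : ZMod r)) := (Bj _).2 ⟨m, hm, le_refl m, rfl⟩
  intro w hw
  have hwN : w ∈ Nplus Astar v := by
    rw [hN]; exact ⟨m, hm, le_refl m, hw⟩
  have key : Nplus Astar w ⊆ Nsecond Astar v := by
    intro z hz
    refine ⟨Set.mem_biUnion hwN hz, ?_⟩
    intro hzv
    rw [hN] at hzv
    obtain ⟨t, ht1, htm, hφz⟩ := hzv
    have hBz : B (j + (m : ZMod r)) (j + (t : ZMod r)) := by
      have := (hAstar w z).1 hz
      rwa [hw, hφz] at this
    obtain ⟨hplus, -⟩ := hround (j + (m : ZMod r))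
    have hmem : j + (t : ZMod r) ∈ Nplus B (j + (m : ZMod r)) := hBz
    rw [hplus] at hmem
    obtain ⟨s, hs, heq⟩ := hmem
    simp only [Set.mem_Icc] at hs
    -- heq : (j + m) + s = j + t
    have heq' : j + ((m : ZMod r) + (s : ZMod r)) = j + ((t : ℕ) : ZMod r) := by
      simpa [add_assoc] using heq
    have hcast : ((m + s : ℕ) : ZMod r) = ((t : ℕ) : ZMod r) := by
      push_cast
      exact add_left_cancel heq'
    have hmod : (t : ℕ) ≡ (m + s : ℕ) [MOD r] :=
      (ZMod.natCast_eq_natCast_iff _ _ _).1 hcast.symm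
    have hdvd : r ∣ (m + s - t) :=
      (Nat.modEq_iff_dvd' (le_trans htm (Nat.le_add_right m s))).1 hmod
    obtain ⟨q, hq⟩ := hdvd
    have hq1 : 1 ≤ q := Nat.one_le_iff_ne_zero.2 (by rintro rfl; omega)
    have hrq : r ≤ r * q := Nat.le_mul_of_pos_right r hq1
    -- s' := s - t
    have hts : t < s := by omega
    have hs'1 : 1 ≤ s - t := by omega
    have hs'd : s - t ≤ dplus B (j + (m : ZMod r)) := le_trans (Nat.sub_le s t) hs.2
    have hcast2 : ((m + (s - t) : ℕ) : ZMod r) = 0 := by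
      have : m + (s - t) = r * q := by omega
      rw [this]
      simp
    have hBback : B (j + (m : ZMod r)) j := by
      have : j ∈ Nplus B (j + (m : ZMod r)) := by
        rw [hplus]
        refine ⟨s - t, Set.mem_Icc.2 ⟨hs'1, hs'd⟩, ?_⟩
        show (j + (m : ZMod r)) + ((s - t : ℕ) : ZMod r) = j
        have : (j + (m : ZMod r)) + ((s - t : ℕ) : ZMod r)
            = j + ((m + (s - t) : ℕ) : ZMod r) := by push_cast; ring
        rw [this, hcast2, add_zero]
      exact this
    exact hasym _ _ hBjm hBback
  refine ⟨key, ?_⟩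
  exact Set.ncard_le_ncard key (Set.toFinite _)
end

section
/- Let D be a local tournament with a round decomposition D = R[S_1, …, S_r], where R is a round local tournament on r ≥ 2 vertices and each S_i is a strong tournament with vertex set V_i, and let D* = R[V_1, …, V_r], where each V_i is regarded as an arcless digraph (equivalently, D* is D with all arcs inside the parts V_i deleted). If a vertex v ∈ V_j is a Sullivan-1 vertex of S_j and a Sullivan-1 vertex of D*, then v is a Sullivan-1 vertex of D. -/
/-- Let `D` (with arc relation `A`) be a local tournament with round decomposition
`D = R[S_1, …, S_r]`: `R` is a round local tournament on `r ≥ 2` vertices realized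
on `ZMod r` by the relation `B`, the parts `V_i` are the fibres of the surjection
`φ : V → ZMod r`, arcs between distinct parts are exactly those induced by `B`, and
each part induces a strong tournament `S_i`.  Let `D*` be `D` with all arcs inside
the parts deleted.  If `v ∈ V_j` is a Sullivan-1 vertex of `S_j` and a Sullivan-1
vertex of `D*`, then `v` is a Sullivan-1 vertex of `D`. -/
theorem sullivan1_of_part_and_quotient {V : Type*} [Fintype V]
    (A : V → V → Prop) (hA : IsLocalTournament A)
    (r : ℕ) (hr : 2 ≤ r)
    (B : ZMod r → ZMod r → Prop) (hB : IsLocalTournament B) (hBround : IsRound B)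
    (φ : V → ZMod r) (hφ : Function.Surjective φ)
    (hcomp : ∀ x y, φ x ≠ φ y → (A x y ↔ B (φ x) (φ y)))
    (hpartsTourn : ∀ x y, φ x = φ y → x ≠ y → Adjacent A x y)
    (hpartsStrong : ∀ i : ZMod r, ∀ x y, φ x = i → φ y = i →
      Relation.ReflTransGen (fun a b => A a b ∧ φ a = i ∧ φ b = i) x y)
    (j : ZMod r) (v : V) (hv : φ v = j)
    (hS : Sullivan1 (fun a b => A a b ∧ φ a = j ∧ φ b = j) v)
    (hQ : Sullivan1 (fun a b => A a b ∧ φ a ≠ φ b) v) :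
    Sullivan1 A v := by
  classical
  obtain ⟨⟨hBirr, hBasym⟩, -, -⟩ := hB
  set S : V → V → Prop := fun a b => A a b ∧ φ a = j ∧ φ b = j with hSdef
  set Q : V → V → Prop := fun a b => A a b ∧ φ a ≠ φ b with hQdef
  have memN : ∀ (R : V → V → Prop) (w : V), w ∈ Nsecond R v ↔
      ((∃ u, R v u ∧ R u w) ∧ ¬ R v w) := by
    intro R w
    simp [Nsecond, Nplus]
  -- in-neighbourhood decomposition
  have hminus : Nminus A v = Nminus S v ∪ Nminus Q v := by
    ext a
    simp only [Nminus, Set.mem_setOf_eq, Set.mem_union, hSdef, hQdef]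
    constructor
    · intro h
      by_cases haj : φ a = j
      · exact Or.inl ⟨h, haj, hv⟩
      · exact Or.inr ⟨h, by rw [hv]; exact haj⟩
    · rintro (⟨h, -⟩ | ⟨h, -⟩) <;> exact h
  have hdisjminus : Disjoint (Nminus S v) (Nminus Q v) := by
    rw [Set.disjoint_left]
    rintro a ⟨-, haj, -⟩ ⟨-, hne⟩
    exact hne (haj.trans hv.symm)
  have hdm : dminus A v = dminus S v + dminus Q v := by
    rw [dminus, hminus, Set.ncard_union_eq hdisjminus (Set.toFinite _) (Set.toFinite _)]
    rfl
  -- elements of Nsecond Q v are outside part j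
  have hQout : ∀ w ∈ Nsecond Q v, φ w ≠ j := by
    intro w hw
    rw [memN] at hw
    obtain ⟨⟨u, ⟨hvu, hneu⟩, huw, hnew⟩, -⟩ := hw
    intro hwj
    have h1 : B (φ v) (φ u) := (hcomp v u hneu).mp hvu
    have h2 : B (φ u) (φ w) := (hcomp u w hnew).mp huw
    rw [hv] at h1
    rw [hwj] at h2
    exact hBasym _ _ h1 h2
  -- inclusions into Nsecond A v
  have hSsub : Nsecond S v ⊆ Nsecond A v := by
    intro w hw
    rw [memN] at hw
    obtain ⟨⟨u, ⟨hvu, -, huj⟩, huw, -, hwj⟩, hnot⟩ := hw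
    rw [memN]
    exact ⟨⟨u, hvu, huw⟩, fun hAvw => hnot ⟨hAvw, hv, hwj⟩⟩
  have hQsub : Nsecond Q v ⊆ Nsecond A v := by
    intro w hw
    have hwj := hQout w hw
    rw [memN] at hw
    obtain ⟨⟨u, ⟨hvu, -⟩, huw, -⟩, hnot⟩ := hw
    rw [memN]
    refine ⟨⟨u, hvu, huw⟩, fun hAvw => hnot ⟨hAvw, ?_⟩⟩
    rw [hv]
    exact fun h => hwj h.symm
  have hdisjsec : Disjoint (Nsecond S v) (Nsecond Q v) := by
    rw [Set.disjoint_left]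
    intro w hwS hwQ
    apply hQout w hwQ
    rw [memN] at hwS
    exact hwS.1.choose_spec.2.2.2
  have hds : dsecond S v + dsecond Q v ≤ dsecond A v := by
    have := Set.ncard_le_ncard (Set.union_subset hSsub hQsub) (Set.toFinite _)
    rwa [Set.ncard_union_eq hdisjsec (Set.toFinite _) (Set.toFinite _)] at this
  unfold Sullivan1 at hS hQ ⊢
  rw [hdm]
  calc dminus S v + dminus Q v ≤ dsecond S v + dsecond Q v := Nat.add_le_add hS hQ
    _ ≤ dsecond A v := hds
end

section
/- Let D be a local tournament with a round decomposition D = R[S_1, …, S_r], where R is a round local tournament on r ≥ 2 vertices and each S_i is a strong tournament with vertex set V_i, and let D* = R[V_1, …, V_r], where each V_i is regarded as an arcless digraph (equivalently, D* is D with all arcs inside the parts V_i deleted). If a vertex v ∈ V_j is a Sullivan-2 vertex of S_j and a Sullivan-2 vertex of D*, then v is a Sullivan-2 vertex of D. -/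

lemma mem_Nsecond {V : Type*} (A : V → V → Prop) (x w : V) :
    w ∈ Nsecond A x ↔ (∃ u, A x u ∧ A u w) ∧ ¬ A x w := by
  simp [Nsecond, Nplus, Set.mem_diff]

/-- Let `D` (with arc relation `A`) be a local tournament with round decomposition
`D = R[S_1, …, S_r]`: `R` is a round local tournament on `r ≥ 2` vertices realized
on `ZMod r` by the relation `B`, the parts `V_i` are the fibres of the surjection
`φ : V → ZMod r`, arcs between distinct parts are exactly those induced by `B`, and
each part induces a strong tournament `S_i`.  Let `D*` be `D` with all arcs inside
the parts deleted.  If `v ∈ V_j` is a Sullivan-2 vertex of `S_j` and a Sullivan-2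
vertex of `D*`, then `v` is a Sullivan-2 vertex of `D`. -/
theorem sullivan2_of_part_and_quotient {V : Type*} [Fintype V]
    (A : V → V → Prop) (hA : IsLocalTournament A)
    (r : ℕ) (hr : 2 ≤ r)
    (B : ZMod r → ZMod r → Prop) (hB : IsLocalTournament B) (hBround : IsRound B)
    (φ : V → ZMod r) (hφ : Function.Surjective φ)
    (hcomp : ∀ x y, φ x ≠ φ y → (A x y ↔ B (φ x) (φ y)))
    (hpartsTourn : ∀ x y, φ x = φ y → x ≠ y → Adjacent A x y)
    (hpartsStrong : ∀ i : ZMod r, ∀ x y, φ x = i → φ y = i →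
      Relation.ReflTransGen (fun a b => A a b ∧ φ a = i ∧ φ b = i) x y)
    (j : ZMod r) (v : V) (hv : φ v = j)
    (hS : Sullivan2 (fun a b => A a b ∧ φ a = j ∧ φ b = j) v)
    (hQ : Sullivan2 (fun a b => A a b ∧ φ a ≠ φ b) v) :
    Sullivan2 A v := by
    classical
  have hBasym := hB.1.2
  set S : V → V → Prop := fun a b => A a b ∧ φ a = j ∧ φ b = j with hSdef
  set Q : V → V → Prop := fun a b => A a b ∧ φ a ≠ φ b with hQdef
  -- second Q-out-neighbours are outside part j
  have hQ2 : ∀ w, w ∈ Nsecond Q v → φ w ≠ j := by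
    intro w hw hwj
    rw [mem_Nsecond] at hw
    obtain ⟨⟨u, ⟨hvu, hne1⟩, ⟨huw, hne2⟩⟩, -⟩ := hw
    have h1 : B (φ v) (φ u) := (hcomp v u hne1).mp hvu
    have h2 : B (φ u) (φ w) := (hcomp u w hne2).mp huw
    rw [hv] at h1
    rw [hwj] at h2
    exact hBasym _ _ h1 h2
  -- out-neighbourhood splits
  have hUplus : Nplus A v = Nplus S v ∪ Nplus Q v := by
    ext w
    simp only [Nplus, Set.mem_setOf_eq, Set.mem_union, hSdef, hQdef]
    constructor
    · intro h
      by_cases hw : φ w = j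
      · exact Or.inl ⟨h, hv, hw⟩
      · exact Or.inr ⟨h, by rw [hv]; exact fun e => hw e.symm⟩
    · rintro (⟨h, -⟩ | ⟨h, -⟩) <;> exact h
  have hDplus : Disjoint (Nplus S v) (Nplus Q v) := by
    rw [Set.disjoint_left]
    rintro w ⟨-, -, hwj⟩ ⟨-, hne⟩
    rw [hv, hwj] at hne
    exact hne rfl
  have hUminus : Nminus A v = Nminus S v ∪ Nminus Q v := by
    ext w
    simp only [Nminus, Set.mem_setOf_eq, Set.mem_union, hSdef, hQdef]
    constructor
    · intro h
      by_cases hw : φ w = j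
      · exact Or.inl ⟨h, hw, hv⟩
      · exact Or.inr ⟨h, fun e => hw (e.trans hv)⟩
    · rintro (⟨h, -⟩ | ⟨h, -⟩) <;> exact h
  have hDminus : Disjoint (Nminus S v) (Nminus Q v) := by
    rw [Set.disjoint_left]
    rintro w ⟨-, hwj, -⟩ ⟨-, hne⟩
    rw [hwj, hv] at hne
    exact hne rfl
  -- second neighbourhoods embed disjointly
  have hSsub : Nsecond S v ⊆ Nsecond A v := by
    intro w hw
    rw [mem_Nsecond] at hw ⊢
    obtain ⟨⟨u, ⟨hvu, -, -⟩, ⟨huw, -, hwj⟩⟩, hnot⟩ := hw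
    exact ⟨⟨u, hvu, huw⟩, fun hvw => hnot ⟨hvw, hv, hwj⟩⟩
  have hQsub : Nsecond Q v ⊆ Nsecond A v := by
    intro w hw
    have hwj := hQ2 w hw
    rw [mem_Nsecond] at hw ⊢
    obtain ⟨⟨u, ⟨hvu, -⟩, ⟨huw, -⟩⟩, hnot⟩ := hw
    refine ⟨⟨u, hvu, huw⟩, fun hvw => hnot ⟨hvw, ?_⟩⟩
    rw [hv]
    exact fun e => hwj e.symm
  have hD2 : Disjoint (Nsecond S v) (Nsecond Q v) := by
    rw [Set.disjoint_left]
    intro w hwS hwQ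
    rw [mem_Nsecond] at hwS
    obtain ⟨⟨u, -, ⟨-, -, hwj⟩⟩, -⟩ := hwS
    exact hQ2 w hwQ hwj
  -- degree identities
  have eplus : dplus A v = dplus S v + dplus Q v := by
    rw [dplus, hUplus, Set.ncard_union_eq hDplus (Set.toFinite _) (Set.toFinite _)]
    rfl
  have eminus : dminus A v = dminus S v + dminus Q v := by
    rw [dminus, hUminus, Set.ncard_union_eq hDminus (Set.toFinite _) (Set.toFinite _)]
    rfl
  have esecond : dsecond S v + dsecond Q v ≤ dsecond A v := by
    rw [dsecond, dsecond, dsecond,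
      ← Set.ncard_union_eq hD2 (Set.toFinite _) (Set.toFinite _)]
    exact Set.ncard_le_ncard (Set.union_subset hSsub hQsub) (Set.toFinite _)
  rw [Sullivan2] at hS hQ ⊢
  omega
end

section
/- Let R be a round local tournament on r ≥ 2 vertices and let D* = R[V_1, …, V_r] be an extension of R (each V_i a nonempty arcless digraph). Then D* has a vertex that is simultaneously a Sullivan-1 vertex and a Sullivan-2 vertex of D*. -/
-- auxiliary lemmas

lemma zmod_cast_inj {r : ℕ} [NeZero r] {s t : ℕ} (hs : s < r) (ht : t < r)
    (h : (s : ZMod r) = (t : ZMod r)) : s = t := by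
  have h1 : ((s : ZMod r)).val = s := ZMod.val_cast_of_lt hs
  have h2 : ((t : ZMod r)).val = t := ZMod.val_cast_of_lt ht
  rw [h] at h1; omega

lemma sull_out_iff {r : ℕ} {B : ZMod r → ZMod r → Prop} (hround : IsRoundLabelling B)
    (p q : ZMod r) :
    B p q ↔ ∃ t : ℕ, 1 ≤ t ∧ t ≤ dplus B p ∧ p + (t : ZMod r) = q := by
  have h := (hround p).1
  constructor
  · intro hb
    have hq : q ∈ Nplus B p := hb
    rw [h] at hq
    obtain ⟨t, ht, h2⟩ := hq
    exact ⟨t, (Set.mem_Icc.1 ht).1, (Set.mem_Icc.1 ht).2, h2⟩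
  · rintro ⟨t, h1, h2, h3⟩
    have hq : q ∈ Nplus B p := by rw [h]; exact ⟨t, Set.mem_Icc.2 ⟨h1, h2⟩, h3⟩
    exact hq

lemma sull_in_iff {r : ℕ} {B : ZMod r → ZMod r → Prop} (hround : IsRoundLabelling B)
    (p q : ZMod r) :
    B q p ↔ ∃ t : ℕ, 1 ≤ t ∧ t ≤ dminus B p ∧ p - (t : ZMod r) = q := by
  have h := (hround p).2
  constructor
  · intro hb
    have hq : q ∈ Nminus B p := hb
    rw [h] at hq
    obtain ⟨t, ht, h2⟩ := hq
    exact ⟨t, (Set.mem_Icc.1 ht).1, (Set.mem_Icc.1 ht).2, h2⟩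
  · rintro ⟨t, h1, h2, h3⟩
    have hq : q ∈ Nminus B p := by rw [h]; exact ⟨t, Set.mem_Icc.2 ⟨h1, h2⟩, h3⟩
    exact hq

lemma sull_dplus_lt {r : ℕ} [NeZero r] {B : ZMod r → ZMod r → Prop}
    (hor : IsOriented B) (hround : IsRoundLabelling B) (p : ZMod r) :
    dplus B p < r := by
  by_contra h
  push_neg at h
  have : B p p := (sull_out_iff hround p p).2 ⟨r, NeZero.pos r, h, by simp⟩
  exact hor.1 p this

lemma sull_dminus_lt {r : ℕ} [NeZero r] {B : ZMod r → ZMod r → Prop}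
    (hor : IsOriented B) (hround : IsRoundLabelling B) (p : ZMod r) :
    dminus B p < r := by
  by_contra h
  push_neg at h
  have : B p p := (sull_in_iff hround p p).2 ⟨r, NeZero.pos r, h, by simp⟩
  exact hor.1 p this

lemma sull_out_le {r : ℕ} [NeZero r] {B : ZMod r → ZMod r → Prop}
    (hor : IsOriented B) (hround : IsRoundLabelling B) (p : ZMod r) {t : ℕ}
    (h1 : 1 ≤ t) (h2 : t < r) :
    B p (p + (t : ZMod r)) ↔ t ≤ dplus B p := by
  constructor
  · intro h
    obtain ⟨s, hs1, hs2, hs3⟩ := (sull_out_iff hround p _).1 h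
    have hst : s = t :=
      zmod_cast_inj (lt_of_le_of_lt hs2 (sull_dplus_lt hor hround p)) h2
        (by exact add_left_cancel hs3)
    omega
  · intro h
    exact (sull_out_iff hround p _).2 ⟨t, h1, h, rfl⟩

lemma sull_in_le {r : ℕ} [NeZero r] {B : ZMod r → ZMod r → Prop}
    (hor : IsOriented B) (hround : IsRoundLabelling B) (p : ZMod r) {t : ℕ}
    (h1 : 1 ≤ t) (h2 : t < r) :
    B (p - (t : ZMod r)) p ↔ t ≤ dminus B p := by
  constructor
  · intro h
    obtain ⟨s, hs1, hs2, hs3⟩ := (sull_in_iff hround p _).1 h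
    have hst : s = t :=
      zmod_cast_inj (lt_of_le_of_lt hs2 (sull_dminus_lt hor hround p)) h2
        (sub_right_inj.1 hs3)
    omega
  · intro h
    exact (sull_in_iff hround p _).2 ⟨t, h1, h, rfl⟩

lemma sull_core {r : ℕ} [NeZero r] {B : ZMod r → ZMod r → Prop}
    (hor : IsOriented B) (hround : IsRoundLabelling B) (hr : 2 ≤ r)
    (hne : ∀ u : ZMod r, 1 ≤ dminus B u) (i : ZMod r) :
    ∃ j k : ZMod r, Nminus B j ⊆ Nsecond B i ∧ Nminus B k ⊆ Nplus B i := by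
  have hsucc : ∀ u : ZMod r, B u (u + ((1:ℕ) : ZMod r)) := by
    intro u
    have h := (sull_in_le hor hround (u + ((1:ℕ) : ZMod r)) (t := 1) le_rfl (by omega)).2
      (hne (u + ((1:ℕ) : ZMod r)))
    simpa using h
  have hd1 : ∀ u : ZMod r, 1 ≤ dplus B u := by
    intro u
    have := (sull_out_le hor hround u (t := 1) le_rfl (by omega)).1 (hsucc u)
    omega
  set a := dplus B i with ha
  have ha1 : 1 ≤ a := hd1 i
  have har : a < r := sull_dplus_lt hor hround i
  have ha2 : a + 1 < r := by
    by_contra h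
    have h1 : B i (i + ((r - 1 : ℕ) : ZMod r)) :=
      (sull_out_le hor hround i (t := r - 1) (by omega) (by omega)).2 (by omega)
    have h2 : B (i - ((1:ℕ) : ZMod r)) i :=
      (sull_in_le hor hround i (t := 1) le_rfl (by omega)).2 (hne i)
    have he : i + ((r - 1 : ℕ) : ZMod r) = i - ((1:ℕ) : ZMod r) := by
      rw [Nat.cast_sub (by omega : 1 ≤ r), ZMod.natCast_self]
      push_cast
      ring
    rw [he] at h1
    exact hor.2 _ _ h1 h2
  set c := (Finset.Icc 1 a).sup (fun s => s + dplus B (i + (s : ZMod r))) with hc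
  have hIne : (Finset.Icc 1 a).Nonempty := Finset.nonempty_Icc.2 ha1
  have hc_le : ∀ s, 1 ≤ s → s ≤ a → s + dplus B (i + (s : ZMod r)) ≤ c := by
    intro s h1 h2
    rw [hc]
    exact Finset.le_sup (f := fun s : ℕ => s + dplus B (i + (s : ZMod r)))
      (Finset.mem_Icc.2 ⟨h1, h2⟩)
  have hcr : c < r := by
    have hbd : ∀ s ∈ Finset.Icc 1 a, s + dplus B (i + (s : ZMod r)) ≤ r - 1 := by
      intro s hs
      rw [Finset.mem_Icc] at hs
      by_contra hcon
      push_neg at hcon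
      have hb : B (i + (s : ZMod r)) ((i + (s : ZMod r)) + ((r - s : ℕ) : ZMod r)) :=
        (sull_out_le hor hround _ (t := r - s) (by omega) (by omega)).2 (by omega)
      have he : (i + (s : ZMod r)) + ((r - s : ℕ) : ZMod r) = i := by
        rw [Nat.cast_sub (by omega : s ≤ r), ZMod.natCast_self]
        ring
      rw [he] at hb
      have hb2 : B i (i + (s : ZMod r)) :=
        (sull_out_le hor hround i (t := s) (by omega) (by omega)).2 (by omega)
      exact hor.2 _ _ hb2 hb
    have h2 := Finset.sup_le hbd
    rw [← hc] at h2
    omega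
  have hca : a + 1 ≤ c := by
    have h1 : a + dplus B (i + (a : ZMod r)) ≤ c := hc_le a ha1 le_rfl
    have := hd1 (i + (a : ZMod r))
    omega
  have hNs : Nsecond B i = (fun t : ℕ => i + (t : ZMod r)) '' Set.Icc (a + 1) c := by
    ext q
    simp only [Nsecond, Set.mem_diff, Set.mem_iUnion, exists_prop, Set.mem_image,
      Set.mem_Icc]
    constructor
    · rintro ⟨⟨u, hu, hq⟩, hq2⟩
      obtain ⟨s, hs1, hs2, rfl⟩ := (sull_out_iff hround i u).1 hu
      obtain ⟨t', ht1, ht2, rfl⟩ := (sull_out_iff hround _ q).1 hq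
      refine ⟨s + t', ⟨?_, ?_⟩, by push_cast; ring⟩
      · by_contra hcon
        push_neg at hcon
        have hb : B i (i + ((s + t' : ℕ) : ZMod r)) :=
          (sull_out_le hor hround i (t := s + t') (by omega) (by omega)).2 (by omega)
        have he : i + (s : ZMod r) + (t' : ZMod r) = i + ((s + t' : ℕ) : ZMod r) := by
          push_cast
          ring
        exact hq2 (by rw [he]; exact hb)
      · calc s + t' ≤ s + dplus B (i + (s : ZMod r)) := by omega
          _ ≤ c := hc_le s hs1 hs2
    · rintro ⟨t, ⟨htl, htu⟩, rfl⟩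
      obtain ⟨s, hsmem, hcs⟩ :=
        Finset.exists_mem_eq_sup _ hIne (fun s => s + dplus B (i + (s : ZMod r)))
      rw [Finset.mem_Icc] at hsmem
      rw [← hc] at hcs
      constructor
      · refine ⟨i + (s : ZMod r), ?_, ?_⟩
        · exact (sull_out_le hor hround i (t := s) (by omega) (by omega)).2 (by omega)
        · show B (i + (s : ZMod r)) _
          refine (sull_out_iff hround _ _).2 ⟨t - s, by omega, by omega, ?_⟩
          rw [Nat.cast_sub (by omega : s ≤ t)]
          ring
      · intro hmem
        obtain ⟨s', hs1', hs2', hs3'⟩ := (sull_out_iff hround i _).1 hmem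
        have : s' = t := zmod_cast_inj (by omega) (by omega) (add_left_cancel hs3')
        omega
  have hk : Nminus B (i + ((a + 1 : ℕ) : ZMod r)) ⊆ Nplus B i := by
    set k := i + ((a + 1 : ℕ) : ZMod r) with hkdef
    have hik : k - ((a + 1 : ℕ) : ZMod r) = i := by rw [hkdef]; ring
    have hdk : dminus B k ≤ a := by
      by_contra hcon
      push_neg at hcon
      have hb : B (k - ((a + 1 : ℕ) : ZMod r)) k :=
        (sull_in_le hor hround k (t := a + 1) (by omega) (by omega)).2 (by omega)
      rw [hik] at hb
      have := (sull_out_le hor hround i (t := a + 1) (by omega) (by omega)).1 hb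
      omega
    intro q hq
    obtain ⟨t, ht1, ht2, rfl⟩ := (sull_in_iff hround k q).1 hq
    have he : k - ((t : ℕ) : ZMod r) = i + ((a + 1 - t : ℕ) : ZMod r) := by
      rw [hkdef, Nat.cast_sub (by omega : t ≤ a + 1)]
      push_cast
      ring
    rw [he]
    exact (sull_out_iff hround i _).2 ⟨a + 1 - t, by omega, by omega, rfl⟩
  by_cases hcase : c = r - 1
  · refine ⟨i, i + ((a + 1 : ℕ) : ZMod r), ?_, hk⟩
    intro q hq
    obtain ⟨t, ht1, ht2, rfl⟩ := (sull_in_iff hround i q).1 hq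
    have hdi : dminus B i < r := sull_dminus_lt hor hround i
    have hge : a + 1 ≤ r - t := by
      by_contra hcon
      push_neg at hcon
      have hb : B i (i + ((r - t : ℕ) : ZMod r)) :=
        (sull_out_le hor hround i (t := r - t) (by omega) (by omega)).2 (by omega)
      have he : i + ((r - t : ℕ) : ZMod r) = i - ((t : ℕ) : ZMod r) := by
        rw [Nat.cast_sub (by omega : t ≤ r), ZMod.natCast_self]
        ring
      rw [he] at hb
      exact hor.2 _ _ hb ((sull_in_iff hround i _).2 ⟨t, ht1, ht2, rfl⟩)
    rw [hNs]
    refine ⟨r - t, Set.mem_Icc.2 ⟨hge, by omega⟩, ?_⟩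
    show i + ((r - t : ℕ) : ZMod r) = i - ((t : ℕ) : ZMod r)
    rw [Nat.cast_sub (by omega : t ≤ r), ZMod.natCast_self]
    ring
  · have hcr2 : c + 1 < r := by omega
    set j := i + ((c + 1 : ℕ) : ZMod r) with hjdef
    refine ⟨j, i + ((a + 1 : ℕ) : ZMod r), ?_, hk⟩
    have hdj : dminus B j ≤ c - a := by
      by_contra hcon
      push_neg at hcon
      have hb : B (j - ((c + 1 - a : ℕ) : ZMod r)) j :=
        (sull_in_le hor hround j (t := c + 1 - a) (by omega) (by omega)).2 (by omega)
      have he : j - ((c + 1 - a : ℕ) : ZMod r) = i + ((a : ℕ) : ZMod r) := by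
        rw [hjdef, Nat.cast_sub (by omega : a ≤ c + 1)]
        push_cast
        ring
      rw [he] at hb
      obtain ⟨t', ht1, ht2, ht3⟩ := (sull_out_iff hround _ _).1 hb
      rw [hjdef] at ht3
      have hcast : ((a + t' : ℕ) : ZMod r) = ((c + 1 : ℕ) : ZMod r) := by
        push_cast at ht3 ⊢
        linear_combination ht3
      have hbound : a + dplus B (i + (a : ZMod r)) ≤ c := hc_le a ha1 le_rfl
      have : a + t' = c + 1 := zmod_cast_inj (by omega) (by omega) hcast
      omega
    intro q hq
    obtain ⟨t, ht1, ht2, rfl⟩ := (sull_in_iff hround j q).1 hq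
    have he : j - ((t : ℕ) : ZMod r) = i + ((c + 1 - t : ℕ) : ZMod r) := by
      rw [hjdef, Nat.cast_sub (by omega : t ≤ c + 1)]
      push_cast
      ring
    rw [hNs, he]
    exact ⟨c + 1 - t, Set.mem_Icc.2 ⟨by omega, by omega⟩, rfl⟩

lemma sull_master {V : Type*} [Fintype V] {r : ℕ} [NeZero r] (hr : 2 ≤ r)
    {B : ZMod r → ZMod r → Prop} (hor : IsOriented B) (hround : IsRoundLabelling B)
    (φ : V → ZMod r) (hφ : Function.Surjective φ)
    (Astar : V → V → Prop) (hA : ∀ x y, Astar x y ↔ B (φ x) (φ y)) :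
    ∃ x : V, Sullivan1 Astar x ∧ Sullivan2 Astar x := by
  have hNp : ∀ x : V, Nplus Astar x = φ ⁻¹' Nplus B (φ x) := by
    intro x; ext q; simp [Nplus, hA]
  have hNm : ∀ x : V, Nminus Astar x = φ ⁻¹' Nminus B (φ x) := by
    intro x; ext q; simp [Nminus, hA]
  have hNs : ∀ x : V, Nsecond Astar x = φ ⁻¹' Nsecond B (φ x) := by
    intro x; ext q
    simp only [Nsecond, Nplus, Set.mem_diff, Set.mem_preimage, Set.mem_iUnion,
      Set.mem_setOf_eq, exists_prop, hA]
    constructor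
    · rintro ⟨⟨u, h1, h2⟩, h3⟩
      exact ⟨⟨φ u, h1, h2⟩, h3⟩
    · rintro ⟨⟨w, h1, h2⟩, h3⟩
      obtain ⟨u, rfl⟩ := hφ w
      exact ⟨⟨u, h1, h2⟩, h3⟩
  have Wmono : ∀ {S T : Set (ZMod r)}, S ⊆ T → (φ ⁻¹' S).ncard ≤ (φ ⁻¹' T).ncard :=
    fun h => Set.ncard_le_ncard (Set.preimage_mono h) (Set.toFinite _)
  by_cases hz : ∃ u : ZMod r, Nminus B u = ∅
  · obtain ⟨u, hu⟩ := hz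
    obtain ⟨x, rfl⟩ := hφ u
    have h0 : dminus Astar x = 0 := by
      rw [dminus, hNm, hu]
      simp
    exact ⟨x, by simp [Sullivan1, h0], by simp [Sullivan2, h0]⟩
  · push_neg at hz
    have hne : ∀ u : ZMod r, 1 ≤ dminus B u := by
      intro u
      have h1 : (Nminus B u).Nonempty := hz u
      have h2 : 0 < (Nminus B u).ncard := (Set.ncard_pos (Set.toFinite _)).2 h1
      exact h2
    obtain ⟨i₀, -, hmin⟩ := Finset.exists_min_image (Finset.univ : Finset (ZMod r))
      (fun u => (φ ⁻¹' Nminus B u).ncard) ⟨0, Finset.mem_univ 0⟩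
    obtain ⟨j, k, hj, hk⟩ := sull_core hor hround hr hne i₀
    obtain ⟨x, rfl⟩ := hφ i₀
    have e1 : dminus Astar x = (φ ⁻¹' Nminus B (φ x)).ncard := by rw [dminus, hNm]
    have e2 : dsecond Astar x = (φ ⁻¹' Nsecond B (φ x)).ncard := by rw [dsecond, hNs]
    have e3 : dplus Astar x = (φ ⁻¹' Nplus B (φ x)).ncard := by rw [dplus, hNp]
    have s1 : dminus Astar x ≤ dsecond Astar x := by
      rw [e1, e2]
      calc (φ ⁻¹' Nminus B (φ x)).ncard ≤ (φ ⁻¹' Nminus B j).ncard :=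
            hmin j (Finset.mem_univ j)
        _ ≤ (φ ⁻¹' Nsecond B (φ x)).ncard := Wmono hj
    have s2 : dminus Astar x ≤ dplus Astar x := by
      rw [e1, e3]
      calc (φ ⁻¹' Nminus B (φ x)).ncard ≤ (φ ⁻¹' Nminus B k).ncard :=
            hmin k (Finset.mem_univ k)
        _ ≤ (φ ⁻¹' Nplus B (φ x)).ncard := Wmono hk
    refine ⟨x, s1, ?_⟩
    unfold Sullivan2
    omega

/-- Let `R` be a round local tournament on `r ≥ 2` vertices (realized on `ZMod r` by
the relation `B`) and let `D* = R[V_1, …, V_r]` be an extension of `R`, i.e. the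
(nonempty, arcless) parts are the fibres of a surjection `φ : V → ZMod r` and
`Astar x y ↔ B (φ x) (φ y)`.  Then `D*` has a vertex that is simultaneously a
Sullivan-1 vertex and a Sullivan-2 vertex of `D*`. -/
theorem extension_of_round_has_sullivan_vertex {V : Type*} [Fintype V]
    (r : ℕ) (hr : 2 ≤ r)
    (B : ZMod r → ZMod r → Prop) (hB : IsLocalTournament B) (hBround : IsRound B)
    (φ : V → ZMod r) (hφ : Function.Surjective φ)
    (Astar : V → V → Prop) (hAstar : ∀ x y, Astar x y ↔ B (φ x) (φ y)) :
    ∃ x : V, Sullivan1 Astar x ∧ Sullivan2 Astar x := by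
  haveI : NeZero r := ⟨by omega⟩
  obtain ⟨r', hr'pos, e, hRL⟩ := hBround
  haveI : NeZero r' := ⟨by omega⟩
  have hcard : r' = r := by
    have h1 := Fintype.card_congr e
    rwa [ZMod.card, ZMod.card] at h1
  subst hcard
  have hor' : IsOriented (fun i j => B (e i) (e j)) :=
    ⟨fun x h => hB.1.1 (e x) h, fun x y h h' => hB.1.2 (e x) (e y) h h'⟩
  exact sull_master hr hor' hRL (fun x => e.symm (φ x))
    (fun i => by obtain ⟨x, hx⟩ := hφ (e i); exact ⟨x, by simp [hx]⟩)
    Astar (fun x y => by rw [hAstar]; simp)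
end

section
/- Let D be an oriented graph and let C be a set of vertices of D such that there is no arc from a vertex outside C to a vertex in C. If a vertex v ∈ C is a Sullivan-1 vertex (respectively, a Sullivan-2 vertex) of the subdigraph of D induced by C, then v is a Sullivan-1 vertex (respectively, a Sullivan-2 vertex) of D. -/
/-- Let `D` be an oriented graph and `C` a set of vertices such that there is no arc
from a vertex outside `C` to a vertex in `C`.  If `v ∈ C` is a Sullivan-1
(respectively Sullivan-2) vertex of the subdigraph induced by `C`, then `v` is a
Sullivan-1 (respectively Sullivan-2) vertex of `D`. -/
theorem sullivan_of_initial_induced_subdigraph {V : Type*} [Fintype V]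
    (A : V → V → Prop) (hA : IsOriented A)
    (C : Set V) (hC : ∀ x y : V, x ∉ C → y ∈ C → ¬ A x y)
    (v : V) (hv : v ∈ C) :
    (Sullivan1 (fun a b => A a b ∧ a ∈ C ∧ b ∈ C) v → Sullivan1 A v) ∧
    (Sullivan2 (fun a b => A a b ∧ a ∈ C ∧ b ∈ C) v → Sullivan2 A v) := by
  set A' : V → V → Prop := fun a b => A a b ∧ a ∈ C ∧ b ∈ C with hA'
  have hminus : Nminus A' v = Nminus A v := by
    ext y
    simp only [Nminus, Set.mem_setOf_eq, hA']
    constructor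
    · rintro ⟨h, _, _⟩; exact h
    · intro h
      by_cases hy : y ∈ C
      · exact ⟨h, hy, hv⟩
      · exact absurd h (hC y v hy hv)
  have hplus : Nplus A' v ⊆ Nplus A v := fun y hy => hy.1
  have hsecond : Nsecond A' v ⊆ Nsecond A v := by
    rintro y ⟨hy1, hy2⟩
    simp only [Set.mem_iUnion] at hy1
    obtain ⟨u, hu, hy⟩ := hy1
    constructor
    · simp only [Set.mem_iUnion]
      exact ⟨u, hplus hu, hy.1⟩
    · intro hvy
      exact hy2 ⟨hvy, hv, hy.2.2⟩
  have hdm : dminus A' v = dminus A v := by rw [dminus, dminus, hminus]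
  have hdp : dplus A' v ≤ dplus A v :=
    Set.ncard_le_ncard hplus (Set.toFinite _)
  have hds : dsecond A' v ≤ dsecond A v :=
    Set.ncard_le_ncard hsecond (Set.toFinite _)
  constructor
  · intro h; rw [Sullivan1] at h ⊢; omega
  · intro h; rw [Sullivan2] at h ⊢; omega
end
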